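/- Let K be a field of characteristic zero. Then every prime ideal of the polynomial ring K[X, Y] in two variables is a set theoretic complete intersection. -/

import Mathlib

open Polynomial
open scoped nonZeroDivisors

/-- The height of an ideal: the infimum of the heights (in the prime spectrum)
of the prime ideals containing it. -/
noncomputable def idealHeight {A : Type*} [CommRing A] (I : Ideal A) : ℕ∞ :=
  ⨅ (P : PrimeSpectrum A) (_ : I ≤ P.asIdeal), Order.height P

/-- An ideal `I` of a commutative ring is a set theoretic complete intersection if there
exist `n` elements, with `n` the height of `I`, such that the radical of `I` equals the
radical of the ideal they generate. -/
def IsSTCI {A : Type*} [CommRing A] (I : Ideal A) : Prop :=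
  ∃ n : ℕ, (n : ℕ∞) = idealHeight I ∧
    ∃ a : Fin n → A, I.radical = (Ideal.span (Set.range a)).radical

section Aux

lemma idealHeight_eq_height {A : Type*} [CommRing A] (P : Ideal A) (hP : P.IsPrime) :
    idealHeight P = Order.height (⟨P, hP⟩ : PrimeSpectrum A) := by
  apply le_antisymm
  · exact iInf₂_le (⟨P, hP⟩ : PrimeSpectrum A) le_rfl
  · exact le_iInf₂ fun Q hQ => Order.height_mono
      ((PrimeSpectrum.asIdeal_le_asIdeal (⟨P, hP⟩ : PrimeSpectrum A) Q).mp hQ)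

lemma ker_adjoinRoot_mk {R : Type*} [CommRing R] (f : Polynomial R) :
    RingHom.ker (AdjoinRoot.mk f) = Ideal.span {f} := by
  ext g
  rw [RingHom.mem_ker, AdjoinRoot.mk_eq_zero, Ideal.mem_span_singleton]

lemma comap_comap_symm {R S : Type*} [CommRing R] [CommRing S] (e : R ≃+* S) (P : Ideal R) :
    (P.comap e.symm).comap e = P := by
  ext x
  simp [Ideal.mem_comap]

lemma comap_span_equiv {R S : Type*} [CommRing R] [CommRing S] (e : R ≃+* S) (s : Set S) :
    (Ideal.span s).comap e = Ideal.span (e.symm '' s) := by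
  rw [← Ideal.map_symm, Ideal.map_span]

lemma not_dvd_C_of_natDegree_ne_zero {A : Type*} [CommRing A] [IsDomain A] {p : Polynomial A}
    (hp : p.natDegree ≠ 0) {d : A} (hd : d ≠ 0) : ¬ p ∣ Polynomial.C d := by
  rintro ⟨t, ht⟩
  have hC0 : (Polynomial.C d) ≠ 0 := by simpa using hd
  have hp0 : p ≠ 0 := by rintro rfl; simp at ht; exact hC0 (by simpa using ht)
  have ht0 : t ≠ 0 := by rintro rfl; rw [mul_zero] at ht; exact hC0 ht
  have := Polynomial.natDegree_C d
  rw [ht, Polynomial.natDegree_mul hp0 ht0] at this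
  omega

/-- Dichotomy for nonzero primes of `K[x][y]`: principal (with prime generator) or maximal. -/
lemma dich_poly {K : Type*} [Field K] (P : Ideal (Polynomial (Polynomial K)))
    (hP : P.IsPrime) (hbot : P ≠ ⊥) :
    (∃ p, Prime p ∧ P = Ideal.span {p}) ∨ P.IsMaximal := by
  classical
  haveI := hP
  set A := Polynomial K
  set P₀ : Ideal A := P.comap (Polynomial.C : A →+* Polynomial A) with hP₀def
  haveI hP₀prime : P₀.IsPrime := Ideal.IsPrime.comap _
  by_cases h0 : P₀ = ⊥
  · -- `P` is generated by any prime element it contains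
    left
    obtain ⟨p, hpP, hp⟩ := hP.exists_mem_prime_of_ne_bot hbot
    refine ⟨p, hp, le_antisymm ?_ (Ideal.span_le.mpr (by simpa using hpP))⟩
    set F := FractionRing A
    have hinj : Function.Injective (Polynomial.map (algebraMap A F)) :=
      Polynomial.map_injective _ (IsFractionRing.injective A F)
    have hpdeg : p.natDegree ≠ 0 := by
      intro h
      obtain ⟨a, ha⟩ := Polynomial.natDegree_eq_zero.mp h
      have haP : a ∈ P₀ := by rw [hP₀def, Ideal.mem_comap, ha]; exact hpP
      rw [h0, Ideal.mem_bot] at haP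
      exact hp.ne_zero (by rw [← ha, haP, map_zero])
    have hprim : p.IsPrimitive := by
      intro c hc
      obtain ⟨t, ht⟩ := hc
      rcases hp.irreducible.isUnit_or_isUnit ht with h | h
      · exact Polynomial.isUnit_C.mp h
      · exfalso
        have hc0 : (Polynomial.C c) ≠ 0 := by
          rintro hC; rw [hC, zero_mul] at ht; exact hp.ne_zero ht
        have ht0 : t ≠ 0 := by
          rintro rfl; rw [mul_zero] at ht; exact hp.ne_zero ht
        have := Polynomial.natDegree_mul hc0 ht0
        rw [← ht, Polynomial.natDegree_eq_zero_of_isUnit h, Polynomial.natDegree_C] at this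
        omega
    letI := UniqueFactorizationMonoid.toNormalizedGCDMonoid A
    have hpirrF : Irreducible (p.map (algebraMap A F)) :=
      (hprim.irreducible_iff_irreducible_map_fraction_map).mp hp.irreducible
    intro r hr
    rw [Ideal.mem_span_singleton]
    by_cases hdvd : p.map (algebraMap A F) ∣ r.map (algebraMap A F)
    · obtain ⟨s, hs⟩ := hdvd
      obtain ⟨d, hd⟩ := IsLocalization.integerNormalization_map_to_map A⁰ s
      have key : Polynomial.C (d : A) * r = p * IsLocalization.integerNormalization A⁰ s := by
        apply hinj
        rw [Polynomial.map_mul, Polynomial.map_mul, hd, hs, Polynomial.map_C,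
          Algebra.smul_def, Polynomial.algebraMap_apply]
        ring
      have hpdvd : p ∣ Polynomial.C (d : A) * r := ⟨_, key⟩
      rcases hp.dvd_or_dvd hpdvd with h | h
      · exact absurd h (not_dvd_C_of_natDegree_ne_zero hpdeg
          (mem_nonZeroDivisors_iff_ne_zero.mp d.2))
      · exact h
    · exfalso
      have hcop : IsCoprime (p.map (algebraMap A F)) (r.map (algebraMap A F)) :=
        (hpirrF.coprime_iff_not_dvd).mpr hdvd
      obtain ⟨u, v, huv⟩ := hcop
      obtain ⟨cu, hcu⟩ := IsLocalization.integerNormalization_map_to_map A⁰ u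
      obtain ⟨cv, hcv⟩ := IsLocalization.integerNormalization_map_to_map A⁰ v
      set u' := IsLocalization.integerNormalization A⁰ u
      set v' := IsLocalization.integerNormalization A⁰ v
      have key : u' * Polynomial.C (cv : A) * p + v' * Polynomial.C (cu : A) * r
          = Polynomial.C ((cu : A) * (cv : A)) := by
        apply hinj
        rw [Polynomial.map_add, Polynomial.map_mul, Polynomial.map_mul, Polynomial.map_mul,
          Polynomial.map_mul, Polynomial.map_C, Polynomial.map_C, Polynomial.map_C, hcu, hcv,
          Algebra.smul_def, Algebra.smul_def, Polynomial.algebraMap_apply,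
          Polynomial.algebraMap_apply, map_mul, Polynomial.C_mul]
        linear_combination (Polynomial.C (algebraMap A F (cu : A)) *
          Polynomial.C (algebraMap A F (cv : A))) * huv
      have hmem : (cu : A) * (cv : A) ∈ P₀ := by
        rw [hP₀def, Ideal.mem_comap]
        show Polynomial.C ((cu : A) * (cv : A)) ∈ P
        rw [← key]
        exact Ideal.add_mem _ (Ideal.mul_mem_left _ _ hpP) (Ideal.mul_mem_left _ _ hr)
      rw [h0, Ideal.mem_bot] at hmem
      exact mul_ne_zero (mem_nonZeroDivisors_iff_ne_zero.mp cu.2)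
        (mem_nonZeroDivisors_iff_ne_zero.mp cv.2) hmem
  · obtain ⟨π, hπ⟩ : ∃ π, P₀ = Ideal.span {π} :=
      ⟨_, (Submodule.IsPrincipal.span_singleton_generator P₀).symm⟩
    have hπ0 : π ≠ 0 := by
      rintro rfl
      exact h0 (by rw [hπ]; exact Ideal.span_singleton_eq_bot.mpr rfl)
    have hπprime : Prime π := (Ideal.span_singleton_prime hπ0).mp (hπ ▸ hP₀prime)
    haveI hP₀max : P₀.IsMaximal := IsPrime.to_maximal_ideal h0
    letI : Field (A ⧸ P₀) := Ideal.Quotient.field P₀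
    set ψ : Polynomial A →+* Polynomial (A ⧸ P₀) :=
      Polynomial.mapRingHom (Ideal.Quotient.mk P₀) with hψdef
    have hψsurj : Function.Surjective ψ :=
      Polynomial.map_surjective _ Ideal.Quotient.mk_surjective
    have hker : RingHom.ker ψ = Ideal.map Polynomial.C P₀ := by
      rw [hψdef, Polynomial.ker_mapRingHom, Ideal.mk_ker]
    have hkerle : RingHom.ker ψ ≤ P := by
      rw [hker]; exact Ideal.map_le_iff_le_comap.mpr le_rfl
    haveI hQprime : (P.map ψ).IsPrime := Ideal.map_isPrime_of_surjective hψsurj hkerle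
    have hcomap : (P.map ψ).comap ψ = P := by
      rw [Ideal.comap_map_of_surjective ψ hψsurj, ← RingHom.ker_eq_comap_bot]
      exact sup_eq_left.mpr hkerle
    by_cases hQ : P.map ψ = ⊥
    · left
      refine ⟨Polynomial.C π, Polynomial.prime_C_iff.mpr hπprime, ?_⟩
      rw [← hcomap, hQ, ← RingHom.ker_eq_comap_bot, hker, hπ, Ideal.map_span,
        Set.image_singleton]
    · right
      haveI : (P.map ψ).IsMaximal := IsPrime.to_maximal_ideal hQ
      exact hcomap ▸ Ideal.comap_isMaximal_of_surjective ψ hψsurj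

variable {K : Type*} [Field K]

/-- The algebra isomorphism `K[X₀,X₁] ≃ K[x][y]`. -/
noncomputable def mvEquiv (K : Type*) [Field K] :
    MvPolynomial (Fin 2) K ≃ₐ[K] Polynomial (Polynomial K) :=
  (MvPolynomial.finSuccEquiv K 1).trans (Polynomial.mapAlgEquiv
    ((MvPolynomial.finSuccEquiv K 0).trans
      (Polynomial.mapAlgEquiv (MvPolynomial.isEmptyAlgEquiv K (Fin 0)))))

lemma mvEquiv_X_one : mvEquiv K (MvPolynomial.X 1) = Polynomial.C Polynomial.X := by
  have h1 : (1 : Fin 2) = Fin.succ 0 := rfl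
  rw [mvEquiv, AlgEquiv.trans_apply, h1, MvPolynomial.finSuccEquiv_X_succ]
  simp [MvPolynomial.finSuccEquiv_X_zero]

/-- Transfer of the dichotomy to `MvPolynomial (Fin 2) K`. -/
lemma dich_mv (P : Ideal (MvPolynomial (Fin 2) K)) (hP : P.IsPrime) (hbot : P ≠ ⊥) :
    (∃ p, Prime p ∧ P = Ideal.span {p}) ∨ P.IsMaximal := by
  classical
  haveI := hP
  set er : MvPolynomial (Fin 2) K ≃+* Polynomial (Polynomial K) := (mvEquiv K).toRingEquiv
    with herdef
  set Q : Ideal (Polynomial (Polynomial K)) := P.comap er.symm with hQdef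
  haveI hQprime : Q.IsPrime := Ideal.IsPrime.comap _
  have hPQ : P = Q.comap er := (comap_comap_symm er P).symm
  have hQbot : Q ≠ ⊥ := by
    intro h
    apply hbot
    rw [hPQ, h]
    ext x
    simp [Ideal.mem_comap, map_eq_zero_iff _ er.injective]
  rcases dich_poly Q hQprime hQbot with ⟨q, hq, hQspan⟩ | hQM
  · left
    have hq0 : er.symm q ≠ 0 := by
      intro h
      exact hq.ne_zero (by simpa using congrArg er h)
    have hPspan : P = Ideal.span {er.symm q} := by
      rw [hPQ, hQspan, comap_span_equiv, Set.image_singleton]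
    exact ⟨er.symm q, (Ideal.span_singleton_prime hq0).mp (hPspan ▸ hP), hPspan⟩
  · right
    haveI := hQM
    exact hPQ ▸ Ideal.comap_isMaximal_of_surjective _ er.surjective

/-- Every maximal ideal of `K[X₀,X₁]` is generated by two elements. -/
lemma maximal_two_gen (P : Ideal (MvPolynomial (Fin 2) K)) (hP : P.IsMaximal) :
    ∃ f g : MvPolynomial (Fin 2) K, P = Ideal.span {f, g} := by
  classical
  haveI := hP
  -- Zariski's lemma: the quotient is integral over K
  have hint := MvPolynomial.quotient_mk_comp_C_isIntegral_of_isJacobsonRing P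
  set xb : MvPolynomial (Fin 2) K ⧸ P := Ideal.Quotient.mk P (MvPolynomial.X 1) with hxb
  have halg : algebraMap K (MvPolynomial (Fin 2) K ⧸ P)
      = (Ideal.Quotient.mk P).comp MvPolynomial.C := by
    rw [IsScalarTower.algebraMap_eq K (MvPolynomial (Fin 2) K) (MvPolynomial (Fin 2) K ⧸ P),
      MvPolynomial.algebraMap_eq, Ideal.Quotient.algebraMap_eq]
  have hx : IsIntegral K xb := by
    show RingHom.IsIntegralElem _ _
    rw [halg]
    exact hint _
  set f : Polynomial K := minpoly K xb with hfdef
  have hfirr : Irreducible f := minpoly.irreducible hx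
  have hFP : (Polynomial.aeval (MvPolynomial.X 1 : MvPolynomial (Fin 2) K)) f ∈ P := by
    rw [← Ideal.Quotient.eq_zero_iff_mem]
    have h1 : Ideal.Quotient.mk P ((Polynomial.aeval (MvPolynomial.X 1)) f)
        = (Polynomial.aeval xb) f := by
      rw [hxb]
      exact (Polynomial.aeval_algHom_apply (Ideal.Quotient.mkₐ K P) _ f).symm
    rw [h1, hfdef, minpoly.aeval]
  set er : MvPolynomial (Fin 2) K ≃+* Polynomial (Polynomial K) := (mvEquiv K).toRingEquiv
    with herdef
  set Q : Ideal (Polynomial (Polynomial K)) := P.comap er.symm with hQdef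
  have h4 : (mvEquiv K) ((Polynomial.aeval (MvPolynomial.X 1)) f) = Polynomial.C f := by
    have h1 : (mvEquiv K) ((Polynomial.aeval (MvPolynomial.X 1)) f)
        = Polynomial.aeval ((mvEquiv K) (MvPolynomial.X 1)) f :=
      (Polynomial.aeval_algHom_apply (mvEquiv K) _ f).symm
    have h2 : Polynomial.aeval (Polynomial.C (Polynomial.X : Polynomial K)) f
        = Polynomial.C f := by
      have h3 := Polynomial.aeval_algHom_apply
        (Polynomial.CAlgHom (R := K) (A := Polynomial K)) Polynomial.X f
      simpa [Polynomial.CAlgHom] using h3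
    rw [h1, mvEquiv_X_one, h2]
  have hCfQ : Polynomial.C f ∈ Q := by
    rw [hQdef, Ideal.mem_comap]
    have h5 : er.symm (Polynomial.C f) = (Polynomial.aeval (MvPolynomial.X 1)) f := by
      rw [← h4, herdef]
      exact (mvEquiv K).toRingEquiv.symm_apply_apply _
    rw [h5]
    exact hFP
  haveI : Fact (Irreducible f) := ⟨hfirr⟩
  set θ : Polynomial (Polynomial K) →+* Polynomial (AdjoinRoot f) :=
    Polynomial.mapRingHom (AdjoinRoot.mk f) with hθdef
  have hθsurj : Function.Surjective θ :=
    Polynomial.map_surjective _ AdjoinRoot.mk_surjective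
  have hθker : RingHom.ker θ = Ideal.span {Polynomial.C f} := by
    rw [hθdef, Polynomial.ker_mapRingHom, ker_adjoinRoot_mk, Ideal.map_span,
      Set.image_singleton]
  have hθkerle : RingHom.ker θ ≤ Q := by
    rw [hθker]
    exact Ideal.span_le.mpr (by simpa using hCfQ)
  set M : Ideal (Polynomial (AdjoinRoot f)) := Q.map θ with hMdef
  obtain ⟨g, hg⟩ := hθsurj (Submodule.IsPrincipal.generator M)
  have hcomap : M.comap θ = Q := by
    rw [hMdef, Ideal.comap_map_of_surjective θ hθsurj, ← RingHom.ker_eq_comap_bot]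
    exact sup_eq_left.mpr hθkerle
  have hgQ : g ∈ Q := by
    rw [← hcomap, Ideal.mem_comap, hg]
    exact Submodule.IsPrincipal.generator_mem M
  have hQspan : Q = Ideal.span {Polynomial.C f, g} := by
    apply le_antisymm
    · intro t ht
      have htM : θ t ∈ M := Ideal.mem_map_of_mem θ ht
      rw [← Submodule.IsPrincipal.span_singleton_generator M, Submodule.mem_span_singleton]
        at htM
      obtain ⟨c, hc⟩ := htM
      obtain ⟨s, hs⟩ := hθsurj c
      have hker : t - s * g ∈ RingHom.ker θ := by
        rw [RingHom.mem_ker, map_sub, map_mul, hs, hg, ← hc, smul_eq_mul, sub_self]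
      rw [hθker] at hker
      have h5 : t = (t - s * g) + s * g := by ring
      rw [h5]
      refine Ideal.add_mem _ ?_ ?_
      · exact Ideal.span_mono (Set.singleton_subset_iff.mpr (by simp)) hker
      · exact Ideal.mul_mem_left _ _ (Ideal.subset_span (by simp))
    · rw [Ideal.span_le]
      rintro x hx
      simp only [Set.mem_insert_iff, Set.mem_singleton_iff] at hx
      rcases hx with rfl | rfl
      · exact hCfQ
      · exact hgQ
  have hPeq : P = Q.comap er := (comap_comap_symm er P).symm
  rw [hQspan, comap_span_equiv, Set.image_insert_eq, Set.image_singleton] at hPeq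
  exact ⟨_, _, hPeq⟩

lemma prime_lt_span_prime_eq_bot {R : Type*} [CommRing R] [IsDomain R]
    [UniqueFactorizationMonoid R] {p : R} (hp : Prime p)
    {Q : Ideal R} (hQ : Q.IsPrime) (hlt : Q < Ideal.span {p}) : Q = ⊥ := by
  by_contra h
  obtain ⟨q, hqQ, hq⟩ := hQ.exists_mem_prime_of_ne_bot h
  have hdvd : p ∣ q := Ideal.mem_span_singleton.mp (hlt.le hqQ)
  have hassoc : Associated p q := hp.associated_of_dvd hq hdvd
  have : Ideal.span ({p} : Set R) ≤ Q := by
    rw [Ideal.span_singleton_eq_span_singleton.mpr hassoc]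
    exact Ideal.span_le.mpr (by simpa using hqQ)
  exact hlt.not_ge this

end Aux

/-- Over a field of characteristic zero, every prime ideal of the polynomial ring in two
variables is a set theoretic complete intersection. -/
theorem stmt_8 (K : Type*) [Field K] [CharZero K] :
    ∀ P : Ideal (MvPolynomial (Fin 2) K), P.IsPrime → IsSTCI P := by
  classical
  intro P hP
  haveI := hP
  set R := MvPolynomial (Fin 2) K
  set pp : PrimeSpectrum R := ⟨P, hP⟩ with hppdef
  rw [IsSTCI]
  rw [idealHeight_eq_height P hP]
  by_cases hbot : P = ⊥
  · refine ⟨0, ?_, Fin.elim0, ?_⟩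
    · have : IsMin pp := by
        intro q hq
        have h1 : q.asIdeal ≤ P := hq
        have h2 : P ≤ q.asIdeal := by rw [hbot]; exact bot_le
        have : q = pp := PrimeSpectrum.ext (le_antisymm h1 h2)
        rw [this]
      rw [Order.height_eq_zero.mpr this]
      rfl
    · rw [Set.range_eq_empty, Ideal.span_empty, hbot]
  · by_cases hprin : ∃ p, Prime p ∧ P = Ideal.span {p}
    · obtain ⟨p, hp, hPp⟩ := hprin
      refine ⟨1, ?_, fun _ => p, ?_⟩
      · have hle : Order.height pp ≤ 1 := by
          rw [show ((1 : ℕ∞)) = ((1 : ℕ) : ℕ∞) from rfl, Order.height_le_coe_iff]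
          intro q hq
          have hqlt : q.asIdeal < P := hq
          have hqbot : q.asIdeal = ⊥ :=
            prime_lt_span_prime_eq_bot hp q.2 (hPp ▸ hqlt)
          have : IsMin q := by
            intro x hx
            have : x = q := PrimeSpectrum.ext (le_antisymm hx (by
              show q.asIdeal ≤ x.asIdeal
              rw [hqbot]; exact bot_le))
            rw [this]
          rw [Order.height_eq_zero.mpr this]
          exact zero_lt_one
        have hge : 1 ≤ Order.height pp := by
          have hbotprime : (⊥ : Ideal R).IsPrime := Ideal.bot_prime
          set b : PrimeSpectrum R := ⟨⊥, hbotprime⟩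
          have hblt : b < pp := by
            refine lt_of_le_of_ne bot_le ?_
            intro h
            exact hbot (by rw [hppdef] at h; exact (congrArg PrimeSpectrum.asIdeal h).symm)
          calc (1 : ℕ∞) = 0 + 1 := by simp
          _ ≤ Order.height b + 1 := by simp
          _ ≤ Order.height pp := by
              rw [Order.height_eq_iSup_lt_height pp]
              exact le_iSup₂_of_le b hblt le_rfl
        exact (le_antisymm hle hge).symm ▸ rfl
      · have : Set.range (fun _ : Fin 1 => p) = {p} := Set.range_const
        rw [this, ← hPp]
    · have hmax : P.IsMaximal := (dich_mv P hP hbot).resolve_left hprin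
      obtain ⟨p, hpP, hp⟩ := hP.exists_mem_prime_of_ne_bot hbot
      have hsple : Ideal.span {p} ≤ P := Ideal.span_le.mpr (by simpa using hpP)
      have hsplt : Ideal.span {p} < P :=
        lt_of_le_of_ne hsple (fun h => hprin ⟨p, hp, h.symm⟩)
      have hp0 : p ≠ 0 := hp.ne_zero
      have hspprime : (Ideal.span {p}).IsPrime := (Ideal.span_singleton_prime hp0).mpr hp
      set m : PrimeSpectrum R := ⟨Ideal.span {p}, hspprime⟩ with hmdef
      have hbotprime : (⊥ : Ideal R).IsPrime := Ideal.bot_prime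
      set b : PrimeSpectrum R := ⟨⊥, hbotprime⟩ with hbdef
      have hbm : b < m := by
        refine lt_of_le_of_ne bot_le ?_
        intro h
        have : (⊥ : Ideal R) = Ideal.span {p} := congrArg PrimeSpectrum.asIdeal h
        exact hp0 (Ideal.span_singleton_eq_bot.mp this.symm)
      have hmp : m < pp := hsplt
      have hge : 2 ≤ Order.height pp := by
        have h1 : 1 ≤ Order.height m := by
          calc (1 : ℕ∞) = 0 + 1 := by simp
          _ ≤ Order.height b + 1 := by simp
          _ ≤ Order.height m := by
              rw [Order.height_eq_iSup_lt_height m]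
              exact le_iSup₂_of_le b hbm le_rfl
        calc (2 : ℕ∞) = 1 + 1 := by norm_num
        _ ≤ Order.height m + 1 := add_le_add_left h1 1
        _ ≤ Order.height pp := by
            rw [Order.height_eq_iSup_lt_height pp]
            exact le_iSup₂_of_le m hmp le_rfl
      have hle : Order.height pp ≤ 2 := by
        rw [show ((2 : ℕ∞)) = ((2 : ℕ) : ℕ∞) by norm_num, Order.height_le_coe_iff]
        intro q hq
        have hqlt : q.asIdeal < P := hq
        have hqnotmax : ¬ q.asIdeal.IsMaximal := by
          intro hqm
          exact hqlt.ne (hqm.eq_of_le hP.ne_top hqlt.le)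
        by_cases hqbot : q.asIdeal = ⊥
        · have : IsMin q := by
            intro x hx
            have : x = q := PrimeSpectrum.ext (le_antisymm hx (by
              show q.asIdeal ≤ x.asIdeal
              rw [hqbot]; exact bot_le))
            rw [this]
          rw [Order.height_eq_zero.mpr this]
          norm_num
        · rcases dich_mv q.asIdeal q.2 hqbot with ⟨pq, hpq, hqspan⟩ | hqm
          · have hq1 : Order.height q ≤ 1 := by
              rw [show ((1 : ℕ∞)) = ((1 : ℕ) : ℕ∞) from rfl, Order.height_le_coe_iff]
              intro x hx
              have hxlt : x.asIdeal < q.asIdeal := hx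
              have hxbot : x.asIdeal = ⊥ :=
                prime_lt_span_prime_eq_bot hpq x.2 (hqspan ▸ hxlt)
              have : IsMin x := by
                intro y hy
                have : y = x := PrimeSpectrum.ext (le_antisymm hy (by
                  show x.asIdeal ≤ y.asIdeal
                  rw [hxbot]; exact bot_le))
                rw [this]
              rw [Order.height_eq_zero.mpr this]
              exact zero_lt_one
            calc Order.height q ≤ 1 := hq1
            _ < ((2 : ℕ) : ℕ∞) := by norm_num
          · exact absurd hqm hqnotmax
      obtain ⟨f, g, hfg⟩ := maximal_two_gen P hmax
      refine ⟨2, ?_, ![f, g], ?_⟩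
      · rw [le_antisymm hle hge]
        norm_num
      · have hr : Set.range ![f, g] = {f, g} := by
          ext x
          constructor
          · rintro ⟨i, rfl⟩
            fin_cases i <;> simp
          · rintro (rfl | rfl)
            · exact ⟨0, rfl⟩
            · exact ⟨1, rfl⟩
        rw [hr, ← hfg]
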